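/- (Mixed associativity) For power series matrices M_φ, M_ψ, M_ξ of power series with zero constant terms, e^{⊙M_φ}(e^{⊙M_ψ} M_ξ) = e^{⊙(e^{⊙M_φ} M_ψ)} M_ξ, reflecting associativity of composition of formal power series maps. -/

import Mathlib

/-! Multi-index matrices and their symmetric product (Bekbaev). -/

/-- Multi-indices: `n`-tuples of nonnegative integers. -/
abbrev MultiIndex (n : ℕ) := Fin n →₀ ℕ

namespace SymProd

variable {n : ℕ} {R : Type*} [CommRing R]

/-- `|α| = α₁ + ⋯ + αₙ`. -/
def deg (α : MultiIndex n) : ℕ := α.sum fun _ v => v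

/-- `α! = α₁! ⋯ αₙ!`. -/
def mfact (α : MultiIndex n) : ℕ := α.prod fun _ v => v.factorial

/-- The multinomial coefficient `C(α,β) = α!/(β!(α−β)!) = ∏ᵢ C(αᵢ,βᵢ)`. -/
def mchoose (α β : MultiIndex n) : ℕ := ∏ i ∈ α.support ∪ β.support, (α i).choose (β i)

/-- A "matrix" indexed by pairs of multi-indices (row index first). A matrix in
`M(p',p;R)` is such a function supported on rows of degree `p'` and columns of degree `p`. -/
abbrev Mat (n : ℕ) (R : Type*) := MultiIndex n → MultiIndex n → R

/-- `A` belongs to `M(p',p;R)`: supported on rows `α'` with `|α'| = p'` and columns `α`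
with `|α| = p`. -/
def IsHom (p' p : ℕ) (A : Mat n R) : Prop :=
  ∀ α' α, A α' α ≠ 0 → deg α' = p' ∧ deg α = p

/-- The symmetric product
`(A ⊙ B)^{α'}_α = ∑_{β' ≪ α', β ≪ α} C(α,β) A^{β'}_β B^{α'−β'}_{α−β}`.
For `A ∈ M(p',p;R)` and `B ∈ M(q',q;R)` this agrees with Bekbaev's Definition 1
(the degree restrictions on `β, β'` hold automatically on the support of `A`). -/
noncomputable def odot (A B : Mat n R) : Mat n R := fun α' α =>
  ∑ β' ∈ Finset.Iic α', ∑ β ∈ Finset.Iic α,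
    (mchoose α β : R) * A β' β * B (α' - β') (α - β)

/-- The identity element `1 ∈ Mat(R)`: the `(0,0)` block is `1`. -/
def matOne : Mat n R := fun α' α => if α' = 0 ∧ α = 0 then 1 else 0

/-- `A^{⊙m}`, the `m`-th symmetric power. -/
noncomputable def sympow (A : Mat n R) : ℕ → Mat n R
  | 0 => matOne
  | m + 1 => odot (sympow A m) A

/-- The row vector `h = (h₁,…,hₙ) ∈ M(0,1;R)` attached to `h : Fin n → R`. -/
noncomputable def rowVec (h : Fin n → R) : Mat n R := fun α' α =>
  if α' = 0 then ∑ j : Fin n, (if α = Finsupp.single j 1 then h j else 0) else 0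

/-- Multi-indices of degree `w` (a finite set). -/
noncomputable def degSet (n w : ℕ) : Finset (MultiIndex n) :=
  (Finset.Iic (Finsupp.equivFunOnFinite.symm fun _ : Fin n => w)).filter fun β => deg β = w

/-- Ordinary matrix product of `v ∈ M(0,w;R)` with `A ∈ M(p',w;R)`, contracting the
weight-`w` index (the columns of `A`, via transposition): the result, in `M(0,p';R)`,
has entries `(v·A)^{α'}_α = ∑_{|β| = w} v^{α'}_β A^{α}_β`. -/
noncomputable def vecMul (w : ℕ) (v A : Mat n R) : Mat n R := fun α' α =>
  ∑ β ∈ degSet n w, v α' β * A α β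

end SymProd

namespace SymProd

variable {n : ℕ} {F : Type*} [Field F]

/-- The constant multi-index `(d,…,d)`. -/
noncomputable def constM (n d : ℕ) : MultiIndex n := Finsupp.equivFunOnFinite.symm fun _ => d

/-- Composition: substitution of the `n`-tuple `φ` (each with zero constant term) into the
multivariate power series `f`, i.e. `f(φ(x))`; the coefficient of `x^α` only receives
contributions from monomials `x^β` of `f` with `|β| ≤ |α|`. -/
noncomputable def mvComp (φ : Fin n → MvPowerSeries (Fin n) F)
    (f : MvPowerSeries (Fin n) F) : MvPowerSeries (Fin n) F := fun α =>
  ∑ β ∈ Finset.Iic (constM n (deg α)),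
    MvPowerSeries.coeff β f * MvPowerSeries.coeff α (∏ j : Fin n, φ j ^ β j)

/-- `m`-fold compositional iterate `φ^{∘m}` of a power series map, `φ^{∘0} = id`. -/
noncomputable def mvIter (φ : Fin n → MvPowerSeries (Fin n) F) :
    ℕ → Fin n → MvPowerSeries (Fin n) F
  | 0 => fun j => MvPowerSeries.X j
  | m + 1 => fun j => mvComp φ (mvIter φ m j)

/-- The matrix `M_φ ∈ Mat(F)` of a power series map `φ : Fⁿ → Fⁿ`: supported on the
column blocks `p = 1`, with `(M_φ)^{α'}_{e_j} = ` the coefficient of `x^{α'}` in `φ_j`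
(from the expansion `φ(x) = ∑_i (x^{⊙i}/i!) M^i_1`). -/
noncomputable def matOf (φ : Fin n → MvPowerSeries (Fin n) F) : Mat n F := fun α' α =>
  ∑ j : Fin n, if α = Finsupp.single j 1 then MvPowerSeries.coeff α' (φ j) else 0

/-- Ordinary (block) matrix product on `Mat(F)`; the contraction is truncated to
column-degrees `≤ deg α'`, which is the full product whenever the left factor `A`
satisfies `A α' β = 0` for `deg β > deg α'` (as is the case for `e^{⊙M_φ}` with
`φ(0) = 0`). -/
noncomputable def matMul (A B : Mat n F) : Mat n F := fun α' α =>
  ∑ β ∈ Finset.Iic (constM n (deg α')), A α' β * B β α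

/-- `E_1`: identity in the `(1,1)` block, zero elsewhere. -/
def E1 : Mat n F := fun α' α => if α' = α ∧ deg α = 1 then 1 else 0

/-- `E_∞`: the (infinite) identity matrix of `Mat(F)`. -/
def Einf : Mat n F := fun α' α => if α' = α then 1 else 0

/-- Powers with respect to ordinary matrix multiplication. -/
noncomputable def matPow (A : Mat n F) : ℕ → Mat n F
  | 0 => Einf
  | m + 1 => matMul A (matPow A m)

/-- `e^{⊙A} = ∑_i A^{⊙i}/i!`; the sum is truncated blockwise at `i = deg α'`, which is
the full sum whenever `A^{⊙i}` has vanishing `(deg α', ·)` blocks for `i > deg α'`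
(as is the case for `A = M_φ` with `M_φ(0,1) = 0`). -/
noncomputable def expOdot (A : Mat n F) : Mat n F := fun α' α =>
  ∑ i ∈ Finset.range (deg α' + 1), (i.factorial : F)⁻¹ * sympow A i α' α

end SymProd


namespace SymProd
open MvPowerSeries
variable {n : ℕ} {R : Type*} [CommRing R] {F : Type*} [Field F]

lemma deg_eq_sum (α : MultiIndex n) : deg α = ∑ j, α j :=
  Finsupp.sum_fintype _ _ fun _ => rfl

lemma deg_add (a b : MultiIndex n) : deg (a + b) = deg a + deg b := by
  simp [deg_eq_sum, Finset.sum_add_distrib]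

lemma deg_mono {a b : MultiIndex n} (h : a ≤ b) : deg a ≤ deg b := by
  rw [deg_eq_sum, deg_eq_sum]
  exact Finset.sum_le_sum fun i _ => Finsupp.le_def.1 h i

lemma apply_le_deg (α : MultiIndex n) (i : Fin n) : α i ≤ deg α := by
  rw [deg_eq_sum]
  exact Finset.single_le_sum (fun _ _ => Nat.zero_le _) (Finset.mem_univ i)

lemma deg_eq_zero {α : MultiIndex n} : deg α = 0 ↔ α = 0 := by
  rw [deg_eq_sum]
  constructor
  · intro h
    ext i
    exact (Finset.sum_eq_zero_iff.1 h) i (Finset.mem_univ i)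
  · rintro rfl; simp

lemma deg_single (j : Fin n) : deg (Finsupp.single j 1) = 1 := by
  simp [deg, Finsupp.sum_single_index]

lemma deg_eq_one {γ : MultiIndex n} (h : deg γ = 1) : ∃ j, γ = Finsupp.single j 1 := by
  rw [deg_eq_sum] at h
  have hne : ∃ j ∈ Finset.univ, γ j ≠ 0 := by
    by_contra hc
    push_neg at hc
    simp [Finset.sum_eq_zero hc] at h
  obtain ⟨j, -, hj⟩ := hne
  refine ⟨j, ?_⟩
  have hle : γ j ≤ 1 := h ▸ Finset.single_le_sum (fun _ _ => Nat.zero_le _) (Finset.mem_univ j)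
  have hj1 : γ j = 1 := le_antisymm hle (Nat.one_le_iff_ne_zero.2 hj)
  have hrest : ∑ i ∈ Finset.univ.erase j, γ i = 0 := by
    have := Finset.add_sum_erase Finset.univ γ (Finset.mem_univ j)
    omega
  ext i
  rcases eq_or_ne i j with rfl | hij
  · simp [hj1]
  · have : γ i = 0 := Finset.sum_eq_zero_iff.1 hrest i (Finset.mem_erase.2 ⟨hij, Finset.mem_univ i⟩)
    simp [Finsupp.single_apply, (Ne.symm hij), this]

lemma constM_apply (w : ℕ) (i : Fin n) : constM n w i = w := rfl

lemma mem_Iic_constM {β : MultiIndex n} {w : ℕ} (h : deg β ≤ w) :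
    β ∈ Finset.Iic (constM n w) := by
  rw [Finset.mem_Iic, Finsupp.le_def]
  exact fun i => le_trans (apply_le_deg β i) h

lemma not_mem_Iic_constM {β : MultiIndex n} {w : ℕ} (h : β ∉ Finset.Iic (constM n w)) :
    w < deg β := by
  by_contra hc
  exact h (mem_Iic_constM (not_lt.1 hc))

lemma Iic_constM_mono {v w : ℕ} (h : v ≤ w) :
    Finset.Iic (constM n v) ⊆ Finset.Iic (constM n w) := by
  apply Finset.Iic_subset_Iic.2
  rw [Finsupp.le_def]
  exact fun i => h

lemma constM_zero : constM n 0 = 0 := by ext i; rfl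

lemma sum_antidiagonal_eq_sum_Iic {M : Type*} [AddCommMonoid M] (α : MultiIndex n)
    (f : MultiIndex n → MultiIndex n → M) :
    ∑ p ∈ Finset.HasAntidiagonal.antidiagonal α, f p.1 p.2 = ∑ β ∈ Finset.Iic α, f β (α - β) := by
  refine Finset.sum_nbij' (fun p => p.1) (fun β => (β, α - β)) ?_ ?_ ?_ ?_ ?_
  · intro p hp
    rw [Finset.HasAntidiagonal.mem_antidiagonal] at hp
    exact Finset.mem_Iic.2 (hp ▸ le_add_right le_rfl)
  · intro β hβ
    rw [Finset.HasAntidiagonal.mem_antidiagonal]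
    exact add_tsub_cancel_of_le (Finset.mem_Iic.1 hβ)
  · intro p hp
    rw [Finset.HasAntidiagonal.mem_antidiagonal] at hp
    have h2 : p.2 = α - p.1 := by rw [← hp, add_tsub_cancel_left]
    exact Prod.ext rfl h2.symm
  · intro β hβ; rfl
  · intro p hp
    rw [Finset.HasAntidiagonal.mem_antidiagonal] at hp
    have h2 : p.2 = α - p.1 := by rw [← hp, add_tsub_cancel_left]
    rw [← h2]






lemma coeff_mul_Iic (f g : MvPowerSeries (Fin n) F) (α : MultiIndex n) :
    coeff α (f * g) = ∑ β ∈ Finset.Iic α, coeff β f * coeff (α - β) g := by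
  classical
  rw [coeff_mul]
  exact sum_antidiagonal_eq_sum_Iic α fun b c => coeff b f * coeff c g

/-- All coefficients of degree `< p` vanish. -/
def LB (f : MvPowerSeries (Fin n) F) (p : ℕ) : Prop := ∀ β, deg β < p → coeff β f = 0

lemma LB_mul {f g : MvPowerSeries (Fin n) F} {p q : ℕ} (hf : LB f p) (hg : LB g q) : LB (f * g) (p + q) := by
  intro β hβ
  rw [coeff_mul_Iic]
  refine Finset.sum_eq_zero fun c hc => ?_
  have hdeg : deg c + deg (β - c) = deg β := by
    rw [← deg_add, add_tsub_cancel_of_le (Finset.mem_Iic.1 hc)]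
  rcases lt_or_ge (deg c) p with h | h
  · rw [hf c h, zero_mul]
  · rw [hg (β - c) (by omega), mul_zero]

lemma LB_pow {f : MvPowerSeries (Fin n) F} (hf : LB f 1) (k : ℕ) : LB (f ^ k) k := by
  induction k with
  | zero => intro β hβ; omega
  | succ m ih =>
      rw [pow_succ]
      exact LB_mul ih hf

/-- `φ^α = ∏ⱼ φⱼ^{αⱼ}`. -/
noncomputable def pw (φ : Fin n → MvPowerSeries (Fin n) F) (α : MultiIndex n) : MvPowerSeries (Fin n) F := ∏ j, φ j ^ α j

lemma LB_pw {φ : Fin n → MvPowerSeries (Fin n) F} (hφ : ∀ j, coeff 0 (φ j) = 0) (α : MultiIndex n) :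
    LB (pw φ α) (deg α) := by
  have h1 : ∀ j, LB (φ j) 1 := by
    intro j β hβ
    have : β = 0 := deg_eq_zero.1 (by omega)
    rw [this]; exact hφ j
  rw [pw, deg_eq_sum]
  induction (Finset.univ : Finset (Fin n)) using Finset.cons_induction with
  | empty => intro β hβ; simp at hβ
  | cons j s hj ih =>
      rw [Finset.prod_cons, Finset.sum_cons]
      exact LB_mul (LB_pow (h1 j) (α j)) ih

lemma coeff_pw_eq_zero {φ : Fin n → MvPowerSeries (Fin n) F} (hφ : ∀ j, coeff 0 (φ j) = 0)
    {α' α : MultiIndex n} (h : deg α' < deg α) : coeff α' (pw φ α) = 0 :=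
  LB_pw hφ α α' h

lemma pw_zero (φ : Fin n → MvPowerSeries (Fin n) F) : pw φ 0 = 1 := by simp [pw]

lemma pw_add (φ : Fin n → MvPowerSeries (Fin n) F) (a b : MultiIndex n) : pw φ (a + b) = pw φ a * pw φ b := by
  rw [pw, pw, pw, ← Finset.prod_mul_distrib]
  exact Finset.prod_congr rfl fun j _ => by rw [Finsupp.add_apply, pow_add]

lemma pw_single (φ : Fin n → MvPowerSeries (Fin n) F) (j : Fin n) : pw φ (Finsupp.single j 1) = φ j := by
  rw [pw]
  rw [Finset.prod_eq_single j (fun i _ hij => by simp [Finsupp.single_apply, Ne.symm hij])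
    (fun h => absurd (Finset.mem_univ j) h)]
  simp


lemma mchoose_sub_single {α : MultiIndex n} {j : Fin n} (h : 1 ≤ α j) :
    mchoose α (α - Finsupp.single j 1) = α j := by
  have hsub : ∀ i, (α - Finsupp.single j 1 : MultiIndex n) i = α i - (if i = j then 1 else 0) := fun i => by
    rw [show ((α - Finsupp.single j 1 : MultiIndex n)) i = α i - (Finsupp.single j 1 : MultiIndex n) i from Finsupp.tsub_apply α (Finsupp.single j 1) i, Finsupp.single_apply]
    rcases eq_or_ne i j with rfl | hij
    · rfl
    · rw [if_neg (Ne.symm hij), if_neg hij]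
  have hj : j ∈ α.support ∪ (α - Finsupp.single j 1).support :=
    Finset.mem_union_left _ (Finsupp.mem_support_iff.2 (by omega))
  rw [mchoose, Finset.prod_eq_single_of_mem j hj]
  · rw [hsub j, if_pos rfl, Nat.choose_symm h, Nat.choose_one_right]
  · intro i _ hij
    rw [hsub i, if_neg hij, Nat.sub_zero, Nat.choose_self]

lemma col_rep {M : Mat n R} (hcol : ∀ α' α, M α' α ≠ 0 → deg α = 1) (γ' γ : MultiIndex n) :
    M γ' γ = ∑ j, if γ = Finsupp.single j 1 then M γ' (Finsupp.single j 1) else 0 := by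
  rcases eq_or_ne (deg γ) 1 with h1 | h1
  · obtain ⟨j, rfl⟩ := deg_eq_one h1
    rw [Finset.sum_eq_single j (fun i _ hij => by
      rw [if_neg]
      intro hc
      have := DFunLike.congr_fun hc i
      simp [Finsupp.single_apply, hij, Ne.symm hij] at this)
      (fun hc => absurd (Finset.mem_univ j) hc)]
    rw [if_pos rfl]
  · have h0 : M γ' γ = 0 := by
      by_contra hc; exact h1 (hcol _ _ hc)
    rw [h0]
    refine (Finset.sum_eq_zero fun j _ => ?_).symm
    rw [if_neg]
    intro hc; rw [hc] at h1; exact h1 (deg_single j)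

/-- The series of the `j`-th column of a matrix. -/
noncomputable def colSer (M : Mat n F) (j : Fin n) : MvPowerSeries (Fin n) F :=
  fun β' => M β' (Finsupp.single j 1)

lemma coeff_colSer (M : Mat n F) (j : Fin n) (β' : MultiIndex n) :
    coeff β' (colSer M j) = M β' (Finsupp.single j 1) := rfl

/-- Explicit formula for symmetric powers of a column-degree-1 matrix. -/
lemma sympow_eq {M : Mat n F} (hcol : ∀ α' α, M α' α ≠ 0 → deg α = 1)
    (d : ℕ) (α' α : MultiIndex n) :
    sympow M d α' α =
      if deg α = d then (d.factorial : F) * coeff α' (pw (colSer M) α) else 0 := by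
  induction d generalizing α' α with
  | zero =>
      rcases eq_or_ne (deg α) 0 with h0 | h0
      · obtain rfl : α = 0 := deg_eq_zero.1 h0
        rw [if_pos h0]
        simp only [sympow, matOne, pw_zero, MvPowerSeries.coeff_one, Nat.factorial_zero,
          Nat.cast_one, one_mul]
        by_cases h : α' = 0 <;> simp [h]
      · rw [if_neg h0]
        have : α ≠ 0 := fun hc => h0 (by rw [hc]; exact deg_eq_zero.2 rfl ▸ rfl)
        simp only [sympow, matOne]
        rw [if_neg]
        rintro ⟨-, rfl⟩
        exact h0 (deg_eq_zero.2 rfl)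
  | succ m ih =>
      show odot (sympow M m) M α' α = _
      rw [odot]
      have key : ∀ β' ∈ Finset.Iic α', ∑ β ∈ Finset.Iic α,
          (mchoose α β : F) * sympow M m β' β * M (α' - β') (α - β) =
          ∑ j, (α j : F) *
            (if deg α = m + 1 then (m.factorial : F) *
              coeff β' (pw (colSer M) (α - Finsupp.single j 1)) else 0) *
            M (α' - β') (Finsupp.single j 1) * (if Finsupp.single j 1 ≤ α then 1 else 0) := by
        intro β' _
        have : ∀ β ∈ Finset.Iic α,
            (mchoose α β : F) * sympow M m β' β * M (α' - β') (α - β) =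
            ∑ j, (if α - β = Finsupp.single j 1 then
              (mchoose α β : F) * sympow M m β' β * M (α' - β') (Finsupp.single j 1) else 0) := by
          intro β _
          rw [col_rep hcol (α' - β') (α - β), Finset.mul_sum]
          refine Finset.sum_congr rfl fun j _ => ?_
          by_cases h : α - β = Finsupp.single j 1 <;> simp [h]
        rw [Finset.sum_congr rfl this, Finset.sum_comm]
        refine Finset.sum_congr rfl fun j _ => ?_
        by_cases hj : Finsupp.single j 1 ≤ α
        · rw [Finset.sum_eq_single_of_mem (α - Finsupp.single j 1)
            (Finset.mem_Iic.2 tsub_le_self) (fun β hβ hne => by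
              rw [if_neg]
              intro hc
              apply hne
              have hβle := Finset.mem_Iic.1 hβ
              have := congrArg (fun x => α - x) hc
              simpa [tsub_tsub_cancel_of_le hβle] using this)]
          have hsub : α - (α - Finsupp.single j 1) = Finsupp.single j 1 :=
            tsub_tsub_cancel_of_le hj
          rw [if_pos hsub, ih]
          have hj1 : 1 ≤ α j := by
            have := Finsupp.le_def.1 hj j
            simpa using this
          have hd := deg_add (α - Finsupp.single j 1) (Finsupp.single j 1)
          rw [tsub_add_cancel_of_le hj, deg_single] at hd
          rw [mchoose_sub_single hj1, if_pos hj, mul_one]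
          by_cases hm : deg α = m + 1
          · rw [if_pos (by omega : deg (α - Finsupp.single j 1) = m), if_pos hm]
          · rw [if_neg (by omega), if_neg hm]
        · rw [if_neg hj, mul_zero]
          refine Finset.sum_eq_zero fun β hβ => ?_
          rw [if_neg]
          intro hc
          apply hj
          rw [← hc]
          exact tsub_le_self
      rw [Finset.sum_congr rfl key]
      rw [Finset.sum_comm]
      by_cases hm : deg α = m + 1
      · rw [if_pos hm]
        have step : ∀ j, ∑ β' ∈ Finset.Iic α',
            (α j : F) * (if deg α = m + 1 then (m.factorial : F) *
              coeff β' (pw (colSer M) (α - Finsupp.single j 1)) else 0) *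
            M (α' - β') (Finsupp.single j 1) * (if Finsupp.single j 1 ≤ α then 1 else 0) =
            (α j : F) * (m.factorial : F) * coeff α' (pw (colSer M) α) := by
          intro j
          by_cases hj : Finsupp.single j 1 ≤ α
          · simp only [if_pos hm, if_pos hj, mul_one]
            have : ∑ β' ∈ Finset.Iic α',
                (α j : F) * ((m.factorial : F) * coeff β' (pw (colSer M) (α - Finsupp.single j 1))) *
                M (α' - β') (Finsupp.single j 1) =
                (α j : F) * (m.factorial : F) * ∑ β' ∈ Finset.Iic α',
                  coeff β' (pw (colSer M) (α - Finsupp.single j 1)) *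
                  coeff (α' - β') (colSer M j) := by
              rw [Finset.mul_sum]
              exact Finset.sum_congr rfl fun β' _ => by rw [coeff_colSer]; ring
            rw [this, ← coeff_mul_Iic, ← pw_single (colSer M) j, ← pw_add,
              tsub_add_cancel_of_le hj]
          · have hα0 : α j = 0 := by
              by_contra hc
              apply hj
              rw [Finsupp.single_le_iff]
              omega
            simp [hα0]
        rw [Finset.sum_congr rfl fun j _ => step j]
        rw [← Finset.sum_mul, ← Finset.sum_mul]
        have : ∑ j, (α j : F) = ((m : ℕ) + 1 : ℕ) := by
          rw [← Nat.cast_sum, ← deg_eq_sum, hm]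
        rw [this]
        rw [Nat.factorial_succ]
        push_cast
        ring
      · rw [if_neg hm]
        refine Finset.sum_eq_zero fun j _ => Finset.sum_eq_zero fun β' _ => ?_
        rw [if_neg hm]
        ring

/-- Explicit formula for `e^{⊙M}`: its `(α',α)` entry is the coefficient of `x^{α'}`
in `φ^α` where `φ_j` is the `j`-th column series of `M`. -/
lemma expOdot_eq [CharZero F] {M : Mat n F} (hcol : ∀ α' α, M α' α ≠ 0 → deg α = 1)
    (h0 : ∀ α, M 0 α = 0) (α' α : MultiIndex n) :
    expOdot M α' α = coeff α' (pw (colSer M) α) := by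
  have hc0 : ∀ j, coeff 0 (colSer M j) = 0 := fun j => h0 _
  rw [expOdot]
  rcases le_or_gt (deg α) (deg α') with hle | hlt
  · rw [Finset.sum_eq_single_of_mem (deg α) (Finset.mem_range.2 (by omega))
      (fun i _ hi => by rw [sympow_eq hcol, if_neg (fun hc => hi hc.symm), mul_zero])]
    rw [sympow_eq hcol, if_pos rfl, ← mul_assoc,
      inv_mul_cancel₀ (by exact_mod_cast (deg α).factorial_ne_zero), one_mul]
  · rw [coeff_pw_eq_zero hc0 hlt]
    refine Finset.sum_eq_zero fun i hi => ?_
    rw [Finset.mem_range] at hi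
    rw [sympow_eq hcol, if_neg (by omega), mul_zero]

/-- Substitution of the tuple `φ` into `f`. -/
noncomputable def comp (φ : Fin n → MvPowerSeries (Fin n) F) (f : MvPowerSeries (Fin n) F) :
    MvPowerSeries (Fin n) F :=
  fun α' => ∑ β ∈ Finset.Iic (constM n (deg α')), coeff β f * coeff α' (pw φ β)

lemma coeff_comp (φ : Fin n → MvPowerSeries (Fin n) F) (f : MvPowerSeries (Fin n) F)
    (α' : MultiIndex n) :
    coeff α' (comp φ f) =
      ∑ β ∈ Finset.Iic (constM n (deg α')), coeff β f * coeff α' (pw φ β) := rfl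

lemma coeff_comp_ext {φ : Fin n → MvPowerSeries (Fin n) F}
    (hφ : ∀ j, coeff 0 (φ j) = 0) (f : MvPowerSeries (Fin n) F) {α' : MultiIndex n}
    {T : Finset (MultiIndex n)} (hT : Finset.Iic (constM n (deg α')) ⊆ T) :
    coeff α' (comp φ f) = ∑ β ∈ T, coeff β f * coeff α' (pw φ β) := by
  rw [coeff_comp]
  refine Finset.sum_subset hT fun β _ hβ => ?_
  rw [coeff_pw_eq_zero hφ (not_mem_Iic_constM hβ), mul_zero]

lemma comp_one (φ : Fin n → MvPowerSeries (Fin n) F) : comp φ (1 : MvPowerSeries (Fin n) F) = 1 := by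
  ext α'
  rw [coeff_comp, Finset.sum_eq_single_of_mem 0 (Finset.mem_Iic.2 zero_le)
    (fun β _ hβ => by rw [MvPowerSeries.coeff_one, if_neg hβ, zero_mul])]
  rw [MvPowerSeries.coeff_one, if_pos rfl, one_mul, pw_zero]

lemma comp_mul {φ : Fin n → MvPowerSeries (Fin n) F} (hφ : ∀ j, coeff 0 (φ j) = 0)
    (f g : MvPowerSeries (Fin n) F) : comp φ (f * g) = comp φ f * comp φ g := by
  ext α'
  set w := deg α' with hw
  set S := Finset.Iic (constM n w) with hS
  have hrhs : coeff α' (comp φ f * comp φ g) =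
      ∑ p ∈ (S ×ˢ S).filter (fun p => p.1 + p.2 ∈ S),
        coeff p.1 f * coeff p.2 g * coeff α' (pw φ (p.1 + p.2)) := by
    rw [coeff_mul_Iic]
    have h1 : ∀ a ∈ Finset.Iic α',
        coeff a (comp φ f) * coeff (α' - a) (comp φ g) =
        ∑ β₁ ∈ S, ∑ β₂ ∈ S, coeff β₁ f * coeff β₂ g *
          (coeff a (pw φ β₁) * coeff (α' - a) (pw φ β₂)) := by
      intro a ha
      rw [coeff_comp_ext hφ f (Iic_constM_mono (deg_mono (Finset.mem_Iic.1 ha))),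
        coeff_comp_ext hφ g (Iic_constM_mono (deg_mono tsub_le_self)),
        Finset.sum_mul_sum]
      exact Finset.sum_congr rfl fun β₁ _ => Finset.sum_congr rfl fun β₂ _ => by ring
    rw [Finset.sum_congr rfl h1, Finset.sum_comm]
    have h2 : ∀ β₁ ∈ S, ∑ a ∈ Finset.Iic α', ∑ β₂ ∈ S,
        coeff β₁ f * coeff β₂ g * (coeff a (pw φ β₁) * coeff (α' - a) (pw φ β₂)) =
        ∑ β₂ ∈ S, coeff β₁ f * coeff β₂ g * coeff α' (pw φ (β₁ + β₂)) := by
      intro β₁ _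
      rw [Finset.sum_comm]
      refine Finset.sum_congr rfl fun β₂ _ => ?_
      rw [← Finset.mul_sum, pw_add, coeff_mul_Iic]
    rw [Finset.sum_congr rfl h2, ← Finset.sum_product']
    refine (Finset.sum_subset (Finset.filter_subset _ _) fun p hp hnp => ?_).symm
    have : p.1 + p.2 ∉ S := fun hc => hnp (Finset.mem_filter.2 ⟨hp, hc⟩)
    rw [hS] at this
    rw [coeff_pw_eq_zero hφ (not_mem_Iic_constM this), mul_zero]
  have hlhs : coeff α' (comp φ (f * g)) =
      ∑ q ∈ S.sigma (fun β => Finset.Iic β),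
        coeff q.2 f * coeff (q.1 - q.2) g * coeff α' (pw φ q.1) := by
    rw [coeff_comp]
    rw [Finset.sum_sigma]
    refine Finset.sum_congr rfl fun β _ => ?_
    rw [coeff_mul_Iic, Finset.sum_mul]
  rw [hlhs, hrhs]
  refine Finset.sum_nbij' (fun q => (q.2, q.1 - q.2)) (fun p => ⟨p.1 + p.2, p.1⟩) ?_ ?_ ?_ ?_ ?_
  · rintro ⟨β, c⟩ hq
    rw [Finset.mem_sigma] at hq
    obtain ⟨hβ, hc⟩ := hq
    rw [Finset.mem_Iic] at hc
    refine Finset.mem_filter.2 ⟨Finset.mem_product.2 ⟨?_, ?_⟩, ?_⟩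
    · exact Finset.mem_Iic.2 (le_trans hc (Finset.mem_Iic.1 hβ))
    · exact Finset.mem_Iic.2 (le_trans tsub_le_self (Finset.mem_Iic.1 hβ))
    · simpa [add_tsub_cancel_of_le hc] using hβ
  · intro p hp
    rw [Finset.mem_filter] at hp
    refine Finset.mem_sigma.2 ⟨hp.2, Finset.mem_Iic.2 (le_add_right le_rfl)⟩
  · rintro ⟨β, c⟩ hq
    rw [Finset.mem_sigma] at hq
    have hc := Finset.mem_Iic.1 hq.2
    exact Sigma.ext (add_tsub_cancel_of_le hc) (heq_of_eq rfl)
  · intro p hp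
    simp [add_tsub_cancel_left]
  · rintro ⟨β, c⟩ hq
    rw [Finset.mem_sigma] at hq
    have hc := Finset.mem_Iic.1 hq.2
    simp only
    rw [add_tsub_cancel_of_le hc]

lemma comp_prod {φ : Fin n → MvPowerSeries (Fin n) F} (hφ : ∀ j, coeff 0 (φ j) = 0)
    {ι : Type*} (s : Finset ι) (g : ι → MvPowerSeries (Fin n) F) :
    comp φ (∏ i ∈ s, g i) = ∏ i ∈ s, comp φ (g i) := by
  induction s using Finset.cons_induction with
  | empty => simpa using comp_one φ
  | cons j t hj ih => rw [Finset.prod_cons, Finset.prod_cons, comp_mul hφ, ih]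

lemma comp_pow {φ : Fin n → MvPowerSeries (Fin n) F} (hφ : ∀ j, coeff 0 (φ j) = 0)
    (f : MvPowerSeries (Fin n) F) (k : ℕ) : comp φ (f ^ k) = comp φ f ^ k := by
  induction k with
  | zero => simpa using comp_one φ
  | succ m ih => rw [pow_succ, pow_succ, comp_mul hφ, ih]

lemma comp_pw {φ : Fin n → MvPowerSeries (Fin n) F} (hφ : ∀ j, coeff 0 (φ j) = 0)
    (ψ : Fin n → MvPowerSeries (Fin n) F) (γ : MultiIndex n) :
    comp φ (pw ψ γ) = pw (fun j => comp φ (ψ j)) γ := by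
  rw [pw, comp_prod hφ, pw]
  exact Finset.prod_congr rfl fun j _ => comp_pow hφ _ _

lemma deg_zero : deg (0 : MultiIndex n) = 0 := deg_eq_zero.2 rfl

end SymProd

open SymProd in
/-- mixed associativity: for matrices `M_φ, M_ψ, M_ξ` of power series
maps with zero constant terms (supported on column-block `1`, with vanishing `(0,1)`
block), `e^{⊙M_φ}(e^{⊙M_ψ} M_ξ) = e^{⊙(e^{⊙M_φ} M_ψ)} M_ξ`. -/
theorem expOdot_assoc {n : ℕ} (F : Type*) [Field F] [CharZero F]
    (Mφ Mψ Mξ : Mat n F)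
    (hφcol : ∀ α' α, Mφ α' α ≠ 0 → deg α = 1) (hφ0 : ∀ α, Mφ 0 α = 0)
    (hψcol : ∀ α' α, Mψ α' α ≠ 0 → deg α = 1) (hψ0 : ∀ α, Mψ 0 α = 0)
    (hξcol : ∀ α' α, Mξ α' α ≠ 0 → deg α = 1) (hξ0 : ∀ α, Mξ 0 α = 0) :
    matMul (expOdot Mφ) (matMul (expOdot Mψ) Mξ) =
      matMul (expOdot (matMul (expOdot Mφ) Mψ)) Mξ := by
  classical
  set P := expOdot Mφ with hP
  set Q := expOdot Mψ with hQ
  set χ := matMul P Mψ with hχ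
  have hφc0 : ∀ j, MvPowerSeries.coeff 0 (colSer Mφ j) = 0 := fun j => hφ0 _
  have hψc0 : ∀ j, MvPowerSeries.coeff 0 (colSer Mψ j) = 0 := fun j => hψ0 _
  have Peq : ∀ α' β, P α' β = MvPowerSeries.coeff α' (pw (colSer Mφ) β) :=
    expOdot_eq hφcol hφ0
  have Qeq : ∀ α' β, Q α' β = MvPowerSeries.coeff α' (pw (colSer Mψ) β) :=
    expOdot_eq hψcol hψ0
  have hχcol : ∀ α' γ, χ α' γ ≠ 0 → deg γ = 1 := by
    intro α' γ h
    by_contra hne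
    exact h (Finset.sum_eq_zero fun β _ => by
      rw [show Mψ β γ = 0 from by_contra fun hc => hne (hψcol _ _ hc), mul_zero])
  have hχ0 : ∀ γ, χ 0 γ = 0 := by
    intro γ
    refine Finset.sum_eq_zero fun β _ => ?_
    rcases eq_or_ne β 0 with rfl | hβ
    · rw [hψ0, mul_zero]
    · rw [Peq, coeff_pw_eq_zero hφc0 (by
        rw [deg_zero]
        exact Nat.pos_of_ne_zero fun hc => hβ (deg_eq_zero.1 hc)), zero_mul]
  have hχser : ∀ j, colSer χ j = comp (colSer Mφ) (colSer Mψ j) := by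
    intro j
    funext β'
    show ∑ β ∈ Finset.Iic (constM n (deg β')), P β' β * Mψ β (Finsupp.single j 1) = _
    show _ = ∑ β ∈ Finset.Iic (constM n (deg β')),
      MvPowerSeries.coeff β (colSer Mψ j) * MvPowerSeries.coeff β' (pw (colSer Mφ) β)
    refine Finset.sum_congr rfl fun β _ => ?_
    rw [Peq, coeff_colSer, mul_comm]
  have hkey : ∀ α' γ, expOdot χ α' γ = matMul P Q α' γ := by
    intro α' γ
    rw [expOdot_eq hχcol hχ0]
    have : pw (colSer χ) γ = comp (colSer Mφ) (pw (colSer Mψ) γ) := by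
      rw [comp_pw hφc0]
      rw [pw, pw]
      exact Finset.prod_congr rfl fun j _ => by rw [hχser j]
    rw [this, coeff_comp]
    refine (Finset.sum_congr rfl fun β _ => ?_).symm
    rw [Peq, Qeq, mul_comm]
  funext α' α
  have hRHS : matMul (expOdot χ) Mξ α' α =
      ∑ γ ∈ Finset.Iic (constM n (deg α')),
        (∑ β ∈ Finset.Iic (constM n (deg α')), P α' β * Q β γ) * Mξ γ α :=
    Finset.sum_congr rfl fun γ _ => by rw [hkey]; rfl
  rw [hRHS]
  show ∑ β ∈ Finset.Iic (constM n (deg α')), P α' β * matMul Q Mξ β α = _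
  have hLHS : ∀ β ∈ Finset.Iic (constM n (deg α')),
      P α' β * matMul Q Mξ β α =
      ∑ γ ∈ Finset.Iic (constM n (deg α')), P α' β * (Q β γ * Mξ γ α) := by
    intro β _
    rcases eq_or_ne (P α' β) 0 with h0 | h0
    · rw [h0, zero_mul]
      exact (Finset.sum_eq_zero fun γ _ => by rw [zero_mul]).symm
    · have hdeg : deg β ≤ deg α' := by
        by_contra hc
        exact h0 (by rw [Peq]; exact coeff_pw_eq_zero hφc0 (not_le.1 hc))
      rw [show matMul Q Mξ β α =
          ∑ γ ∈ Finset.Iic (constM n (deg α')), Q β γ * Mξ γ α from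
        Finset.sum_subset (Iic_constM_mono hdeg) fun γ _ hγ => by
          rw [Qeq, coeff_pw_eq_zero hψc0 (not_mem_Iic_constM hγ), zero_mul], Finset.mul_sum]
  rw [Finset.sum_congr rfl hLHS, Finset.sum_comm]
  exact Finset.sum_congr rfl fun γ _ => by rw [Finset.sum_mul]; exact Finset.sum_congr rfl fun β _ => by ring
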